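/- Let a, d, t be integers with t ≥ 1 and a + t − 1 ≤ d, and let r be the relation on ℤ given by r x y ↔ x ∈ Icc a (d − t) ∧ y = x + t (a periodic pairing of period t on the periodic interval Icc a d). Then for all x, y ∈ Icc a d, EqvGen r x y holds if and only if t divides x − y; consequently the orbit equivalence has exactly t orbits on Icc a d, each containing a unique point of Icc a (a + t − 1). -/
import Mathlib


open Relation

/-- A periodic pairing of period `t` on the periodic interval `Icc a d` identifies
points of `Icc a d` exactly when their difference is divisible by `t`; consequently
it has exactly `t` orbits on `Icc a d`, each containing a unique point of
`Icc a (a + t - 1)`. -/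
theorem periodic_pairing_orbits (a d t : ℤ) (ht : 1 ≤ t) (had : a + t - 1 ≤ d)
    (r : ℤ → ℤ → Prop)
    (hr : ∀ x y, r x y ↔ x ∈ Set.Icc a (d - t) ∧ y = x + t) :
    (∀ x ∈ Set.Icc a d, ∀ y ∈ Set.Icc a d, (EqvGen r x y ↔ t ∣ x - y)) ∧
    (∀ x ∈ Set.Icc a d, ∃! y, y ∈ Set.Icc a (a + t - 1) ∧ EqvGen r x y) ∧
    (Nat.card (Quot fun (x y : Set.Icc a d) => EqvGen r x.1 y.1) : ℤ) = t := by
  have ht0 : 0 < t := ht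
  -- forward direction: EqvGen implies divisibility
  have fwd : ∀ x y, EqvGen r x y → t ∣ x - y := by
    intro x y h
    induction h with
    | rel x y hxy =>
      rw [hr] at hxy
      obtain ⟨_, rfl⟩ := hxy
      exact ⟨-1, by ring⟩
    | refl x => simp
    | symm x y h ih => rw [← neg_sub x y]; exact (dvd_neg).mpr ih
    | trans x y z h1 h2 ih1 ih2 =>
      have := dvd_add ih1 ih2
      rwa [sub_add_sub_cancel] at this
  -- every point is related to its canonical representative
  have key : ∀ x ∈ Set.Icc a d, EqvGen r x (a + (x - a) % t) := by
    have : ∀ n : ℕ, ∀ x ∈ Set.Icc a d, (x - a).toNat = n →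
        EqvGen r x (a + (x - a) % t) := by
      intro n
      induction n using Nat.strong_induction_on with
      | _ n ih =>
        intro x hx hn
        simp only [Set.mem_Icc] at hx
        by_cases hxt : x ≤ a + t - 1
        · have hmod : (x - a) % t = x - a :=
            Int.emod_eq_of_lt (by omega) (by omega)
          rw [hmod]
          have : a + (x - a) = x := by ring
          rw [this]
          exact EqvGen.refl x
        · push_neg at hxt
          have hx' : x - t ∈ Set.Icc a d := by
            simp only [Set.mem_Icc]; omega
          have hrel : r (x - t) x := by
            rw [hr]
            constructor
            · simp only [Set.mem_Icc]; omega
            · ring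
          have hrec : EqvGen r (x - t) (a + (x - t - a) % t) := by
            apply ih (x - t - a).toNat (by omega) _ hx' rfl
          have hmodeq : (x - t - a) % t = (x - a) % t := by
            have : x - t - a = (x - a) - t := by ring
            rw [this]
            simp [Int.sub_emod]
          rw [hmodeq] at hrec
          exact EqvGen.trans _ _ _ (EqvGen.symm _ _ (EqvGen.rel _ _ hrel)) hrec
    intro x hx
    exact this (x - a).toNat x hx rfl
  have repmem : ∀ x : ℤ, a + (x - a) % t ∈ Set.Icc a (a + t - 1) := by
    intro x
    have h1 := Int.emod_nonneg (x - a) (by omega : t ≠ 0)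
    have h2 := Int.emod_lt_of_pos (x - a) ht0
    simp only [Set.mem_Icc]; omega
  have repdvd : ∀ x : ℤ, t ∣ x - (a + (x - a) % t) := by
    intro x
    refine ⟨(x - a) / t, ?_⟩
    have := Int.mul_ediv_add_emod (x - a) t
    linarith
  -- part 1
  have part1 : ∀ x ∈ Set.Icc a d, ∀ y ∈ Set.Icc a d, (EqvGen r x y ↔ t ∣ x - y) := by
    intro x hx y hy
    constructor
    · exact fwd x y
    · intro hdvd
      have hx' := key x hx
      have hy' := key y hy
      have hmod : (x - a) % t = (y - a) % t := by
        apply Int.emod_eq_emod_iff_emod_sub_eq_zero.mpr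
        apply Int.emod_eq_zero_of_dvd
        have h4 : (x - a) - (y - a) = x - y := by ring
        rw [h4]; exact hdvd
      rw [hmod] at hx'
      exact EqvGen.trans _ _ _ hx' (EqvGen.symm _ _ hy')
  -- part 2
  have part2 : ∀ x ∈ Set.Icc a d, ∃! y, y ∈ Set.Icc a (a + t - 1) ∧ EqvGen r x y := by
    intro x hx
    refine ⟨a + (x - a) % t, ⟨repmem x, key x hx⟩, ?_⟩
    rintro y ⟨hy, hxy⟩
    have hd := fwd x y hxy
    have hd2 : t ∣ y - (a + (x - a) % t) := by
      have := dvd_sub (repdvd x) hd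
      have h3 : x - (a + (x - a) % t) - (x - y) = y - (a + (x - a) % t) := by ring
      rwa [h3] at this
    have h1 := repmem x
    simp only [Set.mem_Icc] at hy h1
    have := Int.eq_zero_of_abs_lt_dvd hd2 (by rw [abs_lt]; omega)
    omega
  refine ⟨part1, part2, ?_⟩
  -- part 3: cardinality
  have hsub : Set.Icc a (a + t - 1) ⊆ Set.Icc a d := Set.Icc_subset_Icc_right (by omega)
  set R : Set.Icc a d → Set.Icc a d → Prop := fun x y => EqvGen r x.1 y.1 with hR
  have hReqv : Equivalence R := by
    constructor
    · intro x; exact EqvGen.refl _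
    · intro x y h; exact EqvGen.symm _ _ h
    · intro x y z h1 h2; exact EqvGen.trans _ _ _ h1 h2
  let f : Set.Icc a (a + t - 1) → Quot R := fun y => Quot.mk R ⟨y.1, hsub y.2⟩
  have hbij : Function.Bijective f := by
    constructor
    · rintro ⟨y1, hm1⟩ ⟨y2, hm2⟩ hf
      have h := Quot.eq.mp hf
      rw [hReqv.eqvGen_iff] at h
      have hd : t ∣ y1 - y2 := fwd _ _ h
      obtain ⟨hm1a, hm1b⟩ := Set.mem_Icc.mp hm1
      obtain ⟨hm2a, hm2b⟩ := Set.mem_Icc.mp hm2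
      have habs : |y1 - y2| < t := abs_lt.mpr ⟨by omega, by omega⟩
      have h0 : y1 - y2 = 0 := Int.eq_zero_of_abs_lt_dvd hd habs
      simp only [Subtype.mk.injEq]
      omega
    · intro q
      induction q using Quot.ind with
      | _ x =>
        refine ⟨⟨a + (x.1 - a) % t, repmem x.1⟩, ?_⟩
        apply Quot.sound
        exact EqvGen.symm _ _ (key x.1 x.2)
  have hcard : Nat.card (Quot R) = Nat.card (Set.Icc a (a + t - 1)) :=
    (Nat.card_eq_of_bijective f hbij).symm
  have hic : Nat.card (Set.Icc a (a + t - 1)) = t.toNat := by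
    rw [Nat.card_coe_set_eq, ← Finset.coe_Icc, Set.ncard_coe_finset, Int.card_Icc]
    omega
  rw [hcard, hic]
  omega
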